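/- Let L be an odd prime and suppose there exist nonzero integers a, b with a + b ≠ 0 such that a²b²(a+b)² = 2ᵘ·Lᵛ for some nonnegative integers u, v, where writing a = ±2^{u₁}L^{v₁}, b = ±2^{u₂}L^{v₂}, a+b = ±2^{u₃}L^{v₃}, the exponents v₁, v₂, v₃ are not all equal. Then L is a Mersenne prime or a Fermat prime. -/

import Mathlib

lemma odd_pos_dvd_two_pow_aux {n : ℤ} (hodd : Odd n) (hpos : 0 < n) {k : ℕ}
    (hdvd : n ∣ 2 ^ k) : n = 1 := by
  have h1 : n.natAbs ∣ (2 ^ k : ℤ).natAbs := Int.natAbs_dvd_natAbs.mpr hdvd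
  have hodd' : Odd n.natAbs := Int.natAbs_odd.mpr hodd
  have hco : Nat.Coprime n.natAbs 2 := Nat.coprime_two_right.mpr hodd'
  have h2 : (2 ^ k : ℤ).natAbs = 2 ^ k := by rw [Int.natAbs_pow]; norm_num
  rw [h2] at h1
  have := Nat.Coprime.eq_one_of_dvd (Nat.Coprime.pow_right k hco) h1
  omega

lemma lemC (M : ℤ) (hM3 : 3 ≤ M) (hModd : Odd M) (w d : ℕ) (hw : 1 ≤ w)
    (h : M ^ w = 2 ^ d + 1 ∨ M ^ w = 2 ^ d - 1) :
    ∃ k : ℕ, 1 ≤ k ∧ (M = 2 ^ k - 1 ∨ M = 2 ^ k + 1) := by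
  have hMpos : (0:ℤ) < M := by linarith
  rcases Nat.even_or_odd w with hwe | hwo
  · -- w even, w = 2t, t ≥ 1
    obtain ⟨t, rfl⟩ := hwe
    have ht : 1 ≤ t := by omega
    set N : ℤ := M ^ t with hN
    have hNodd : Odd N := hModd.pow
    have hN3 : 3 ≤ N := le_trans hM3 (le_self_pow₀ (by linarith) (by omega))
    have hNsq : M ^ (t + t) = N ^ 2 := by rw [hN]; ring
    rcases h with h | h
    · -- 2^d = N² - 1 = (N-1)(N+1), forces M = 3
      have key : (N - 1) * (N + 1) = 2 ^ d := by
        rw [hNsq] at h; linarith [h]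
      obtain ⟨A, hA⟩ : (2:ℤ) ∣ N - 1 := (Int.even_sub_one.mpr (Int.not_even_iff_odd.mpr hNodd)).two_dvd
      obtain ⟨B, hB⟩ : (2:ℤ) ∣ N + 1 := by
        have : Even (N + 1) := Odd.add_one hNodd
        exact this.two_dvd
      have hAB : B = A + 1 := by linarith
      have hApos : 0 < A := by linarith
      have hAdvd : A ∣ 2 ^ d := ⟨4 * B, by rw [← key, hA, hB]; ring⟩
      have hBdvd : B ∣ 2 ^ d := ⟨4 * A, by rw [← key, hA, hB]; ring⟩
      rcases Int.even_or_odd A with hAe | hAo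
      · -- then B odd, B = 1, contradiction
        have hBo : Odd B := by rw [hAB]; exact Even.add_one hAe
        have := odd_pos_dvd_two_pow_aux hBo (by linarith) hBdvd
        linarith
      · have hA1 : A = 1 := odd_pos_dvd_two_pow_aux hAo hApos hAdvd
        have hNval : N = 3 := by rw [hA1] at hA; linarith
        have hMle : M ≤ N := le_self_pow₀ (by linarith) (by omega)
        have hM : M = 3 := by linarith
        exact ⟨2, by norm_num, Or.inl (by rw [hM]; norm_num)⟩
    · -- 2^d = N² + 1, impossible mod 4
      exfalso
      have key : N ^ 2 + 1 = 2 ^ d := by rw [hNsq] at h; linarith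
      have h4 : (4:ℤ) ∣ N ^ 2 - 1 := by
        obtain ⟨A, hA⟩ : (2:ℤ) ∣ N - 1 :=
          (Int.even_sub_one.mpr (Int.not_even_iff_odd.mpr hNodd)).two_dvd
        obtain ⟨B, hB⟩ : (2:ℤ) ∣ N + 1 := (Odd.add_one hNodd).two_dvd
        exact ⟨A * B, by have : N ^ 2 - 1 = (N - 1) * (N + 1) := by ring
                         rw [this, hA, hB]; ring⟩
      have hdge : 2 ≤ d := by
        by_contra hd
        interval_cases d <;> nlinarith
      obtain ⟨e, rfl⟩ : ∃ e, d = 2 + e := ⟨d - 2, by omega⟩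
      have h4' : (4:ℤ) ∣ 2 ^ (2 + e) := ⟨2 ^ e, by ring⟩
      obtain ⟨C, hC⟩ := h4
      obtain ⟨D, hD⟩ := h4'
      -- N² + 1 = 2^d, N² - 1 = 4C ⇒ 4D - 4C = 2, contradiction
      omega
  · -- w odd, w = 2t+1
    obtain ⟨t, rfl⟩ := hwo
    obtain ⟨S, hS⟩ : (M ^ 2 - 1) ∣ (M ^ 2) ^ t - 1 := by
      have := sub_dvd_pow_sub_pow (M ^ 2) 1 t
      simpa using this
    have hfact : M ^ (2 * t + 1) - M = M * (M ^ 2 - 1) * S := by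
      have : M ^ (2 * t + 1) = (M ^ 2) ^ t * M := by ring
      rw [this]; nlinarith [hS]
    rcases h with h | h
    · -- 2^d = M^w - 1 = (M-1) * Q, Q = 1 + M(M+1)S odd
      have key : (M - 1) * (1 + M * (M + 1) * S) = 2 ^ d := by nlinarith [hfact]
      set Q : ℤ := 1 + M * (M + 1) * S with hQ
      have hQodd : Odd Q := by
        obtain ⟨m, hm⟩ := hModd
        exact ⟨(2 * m + 1) * (m + 1) * S, by rw [hQ, hm]; ring⟩
      have hQpos : 0 < Q := by
        rcases lt_trichotomy Q 0 with h' | h' | h'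
        · nlinarith [pow_pos (show (0:ℤ) < 2 by norm_num) d]
        · rw [h'] at key; simp at key
          nlinarith [pow_pos (show (0:ℤ) < 2 by norm_num) d]
        · exact h'
      have hQdvd : Q ∣ 2 ^ d := ⟨M - 1, by linarith [key, mul_comm (M - 1) Q]⟩
      have hQ1 : Q = 1 := odd_pos_dvd_two_pow_aux hQodd hQpos hQdvd
      rw [hQ1] at key
      have hd1 : 1 ≤ d := by
        by_contra hd
        interval_cases d <;> omega
      exact ⟨d, hd1, Or.inr (by linarith)⟩
    · -- 2^d = M^w + 1 = (M+1) * Q, Q = 1 + M(M-1)S odd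
      have key : (M + 1) * (1 + M * (M - 1) * S) = 2 ^ d := by nlinarith [hfact]
      set Q : ℤ := 1 + M * (M - 1) * S with hQ
      have hQodd : Odd Q := by
        obtain ⟨m, hm⟩ := hModd
        exact ⟨(2 * m + 1) * m * S, by rw [hQ, hm]; ring⟩
      have hQpos : 0 < Q := by
        rcases lt_trichotomy Q 0 with h' | h' | h'
        · nlinarith [pow_pos (show (0:ℤ) < 2 by norm_num) d]
        · rw [h'] at key; simp at key
          nlinarith [pow_pos (show (0:ℤ) < 2 by norm_num) d]
        · exact h'
      have hQdvd : Q ∣ 2 ^ d := ⟨M + 1, by linarith [key, mul_comm (M + 1) Q]⟩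
      have hQ1 : Q = 1 := odd_pos_dvd_two_pow_aux hQodd hQpos hQdvd
      rw [hQ1] at key
      have hd1 : 1 ≤ d := by
        by_contra hd
        interval_cases d <;> omega
      exact ⟨d, hd1, Or.inl (by linarith)⟩

lemma lemK' (M : ℤ) (hM3 : 3 ≤ M) (hModd : Odd M)
    (s₁ s₂ s₃ : ℤ) (h1 : s₁ = 1 ∨ s₁ = -1) (h2 : s₂ = 1 ∨ s₂ = -1)
    (h3 : s₃ = 1 ∨ s₃ = -1) (x y c w : ℕ) (hw : 1 ≤ w) (hxy : x ≤ y)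
    (heq : s₁ * 2 ^ x + s₂ * 2 ^ y = s₃ * 2 ^ c * M ^ w) :
    ∃ k : ℕ, 1 ≤ k ∧ (M = 2 ^ k - 1 ∨ M = 2 ^ k + 1) := by
  have hMpos : (0:ℤ) < M := by linarith
  have hMwodd : Odd (M ^ w) := hModd.pow
  have hMwpos : (0:ℤ) < M ^ w := pow_pos hMpos w
  obtain ⟨d, rfl⟩ : ∃ d, y = x + d := ⟨y - x, by omega⟩
  have heq' : (2:ℤ) ^ x * (s₁ + s₂ * 2 ^ d) = s₃ * 2 ^ c * M ^ w := by
    rw [← heq]; ring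
  rcases Nat.eq_zero_or_pos d with rfl | hd
  · -- d = 0 : s₁ + s₂ ∈ {-2, 0, 2}
    exfalso
    have hMdvd : M ∣ 2 ^ x * (s₁ + s₂) := by
      rw [show (2:ℤ) ^ x * (s₁ + s₂) = 2 ^ x * (s₁ + s₂ * 2 ^ 0) by norm_num, heq']
      exact Dvd.dvd.mul_left (dvd_pow_self M (by omega)) _
    rcases h1 with rfl | rfl <;> rcases h2 with rfl | rfl
    · -- sum = 2 : M ∣ 2^(x+1)
      have : M ∣ 2 ^ (x + 1) := by
        have : (2:ℤ) ^ x * (1 + 1) = 2 ^ (x + 1) := by ring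
        rwa [this] at hMdvd
      have := odd_pos_dvd_two_pow_aux hModd hMpos this
      linarith
    · -- sum = 0 : RHS ≠ 0
      simp at hMdvd
      have hne : s₃ * 2 ^ c * M ^ w ≠ 0 := by
        rcases h3 with rfl | rfl <;> positivity
      rw [← heq'] at hne; simp at hne
    · simp at hMdvd
      have hne : s₃ * 2 ^ c * M ^ w ≠ 0 := by
        rcases h3 with rfl | rfl <;> positivity
      rw [← heq'] at hne; simp at hne
    · have : M ∣ 2 ^ (x + 1) := by
        have h' : (2:ℤ) ^ x * (-1 + -1) = -(2 ^ (x + 1)) := by ring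
        rw [h'] at hMdvd
        exact (dvd_neg.mp hMdvd)
      have := odd_pos_dvd_two_pow_aux hModd hMpos this
      linarith
  · -- d ≥ 1
    have h2d : (2:ℤ) ≤ 2 ^ d := by
      calc (2:ℤ) = 2 ^ 1 := by norm_num
      _ ≤ 2 ^ d := pow_le_pow_right₀ (by norm_num) (by omega)
    set A : ℤ := s₁ + s₂ * 2 ^ d with hA
    have hAodd : Odd A := by
      obtain ⟨e, he⟩ : ∃ e, d = 1 + e := ⟨d - 1, by omega⟩
      rcases h1 with rfl | rfl
      · exact ⟨s₂ * 2 ^ e, by rw [hA, he]; ring⟩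
      · exact ⟨s₂ * 2 ^ e - 1, by rw [hA, he]; ring⟩
    rcases le_or_gt x c with hxc | hxc
    · obtain ⟨e, rfl⟩ : ∃ e, c = x + e := ⟨c - x, by omega⟩
      have hcancel : A = s₃ * 2 ^ e * M ^ w := by
        have h2x : (2:ℤ) ^ x ≠ 0 := by positivity
        apply mul_left_cancel₀ h2x
        rw [heq']; ring
      have he0 : e = 0 := by
        by_contra he
        have : Even A := by
          obtain ⟨f, hf⟩ : ∃ f, e = 1 + f := ⟨e - 1, by omega⟩
          exact ⟨s₃ * 2 ^ f * M ^ w, by rw [hcancel, hf]; ring⟩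
        exact (Int.not_odd_iff_even.mpr this) hAodd
      rw [he0] at hcancel; simp at hcancel
      -- A = s₃ * M ^ w
      rcases h2 with rfl | rfl
      · -- A = s₁ + 2^d > 0, so s₃ = 1, M^w = 2^d + s₁
        have hApos : 0 < A := by
          rcases h1 with rfl | rfl <;> (rw [hA]; simp; linarith)
        rcases h3 with rfl | rfl
        · simp at hcancel
          apply lemC M hM3 hModd w d hw
          rcases h1 with rfl | rfl
          · exact Or.inl (by rw [← hcancel, hA]; ring)
          · exact Or.inr (by rw [← hcancel, hA]; ring)
        · exfalso; rw [hcancel] at hApos; nlinarith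
      · -- A = s₁ - 2^d < 0, so s₃ = -1, M^w = 2^d - s₁
        have hAneg : A < 0 := by
          rcases h1 with rfl | rfl <;> (rw [hA]; simp; linarith)
        rcases h3 with rfl | rfl
        · exfalso; rw [hcancel] at hAneg; nlinarith
        · apply lemC M hM3 hModd w d hw
          rcases h1 with rfl | rfl
          · exact Or.inr (by rw [hA] at hcancel; nlinarith [hcancel])
          · exact Or.inl (by rw [hA] at hcancel; nlinarith [hcancel])
    · -- c < x : parity contradiction
      exfalso
      obtain ⟨e, rfl⟩ : ∃ e, x = c + 1 + e := ⟨x - c - 1, by omega⟩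
      have hcancel : 2 * (2 ^ e * A) = s₃ * M ^ w := by
        have h2c : (2:ℤ) ^ c ≠ 0 := by positivity
        apply mul_left_cancel₀ h2c
        rw [show (2:ℤ) ^ c * (s₃ * M ^ w) = s₃ * 2 ^ c * M ^ w by ring, ← heq']
        ring
      have hodd : Odd (s₃ * M ^ w) := by
        rcases h3 with rfl | rfl
        · simpa using hMwodd
        · simpa using hMwodd.neg
      rw [← hcancel] at hodd
      exact (Int.not_odd_iff_even.mpr ⟨2 ^ e * A, by ring⟩) hodd

lemma lemK (M : ℤ) (hM3 : 3 ≤ M) (hModd : Odd M)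
    (s₁ s₂ s₃ : ℤ) (h1 : s₁ = 1 ∨ s₁ = -1) (h2 : s₂ = 1 ∨ s₂ = -1)
    (h3 : s₃ = 1 ∨ s₃ = -1) (x y c w : ℕ) (hw : 1 ≤ w)
    (heq : s₁ * 2 ^ x + s₂ * 2 ^ y = s₃ * 2 ^ c * M ^ w) :
    ∃ k : ℕ, 1 ≤ k ∧ (M = 2 ^ k - 1 ∨ M = 2 ^ k + 1) := by
  rcases le_total x y with h | h
  · exact lemK' M hM3 hModd s₁ s₂ s₃ h1 h2 h3 x y c w hw h heq
  · exact lemK' M hM3 hModd s₂ s₁ s₃ h2 h1 h3 y x c w hw h (by linarith)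

lemma lemP1 (M : ℤ) (hM3 : 3 ≤ M) (hModd : Odd M)
    (s₁ s₂ s₃ : ℤ) (h1 : s₁ = 1 ∨ s₁ = -1) (h2 : s₂ = 1 ∨ s₂ = -1)
    (h3 : s₃ = 1 ∨ s₃ = -1) (x₁ x₂ x₃ y₁ y₂ y₃ : ℕ)
    (hy12 : y₁ ≤ y₂) (hy13 : y₁ ≤ y₃) (hne : ¬ (y₂ = y₁ ∧ y₃ = y₁))
    (heq : s₁ * 2 ^ x₁ * M ^ y₁ + s₂ * 2 ^ x₂ * M ^ y₂ + s₃ * 2 ^ x₃ * M ^ y₃ = 0) :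
    ∃ k : ℕ, 1 ≤ k ∧ (M = 2 ^ k - 1 ∨ M = 2 ^ k + 1) := by
  have hMpos : (0:ℤ) < M := by linarith
  obtain ⟨p, rfl⟩ : ∃ p, y₂ = y₁ + p := ⟨y₂ - y₁, by omega⟩
  obtain ⟨q, rfl⟩ : ∃ q, y₃ = y₁ + q := ⟨y₃ - y₁, by omega⟩
  have heq' : s₁ * 2 ^ x₁ + s₂ * 2 ^ x₂ * M ^ p + s₃ * 2 ^ x₃ * M ^ q = 0 := by
    have hMy : (M:ℤ) ^ y₁ ≠ 0 := by positivity
    apply mul_left_cancel₀ hMy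
    rw [mul_zero, ← heq]; ring
  rcases Nat.eq_zero_or_pos p with rfl | hp <;> rcases Nat.eq_zero_or_pos q with rfl | hq
  · exact absurd ⟨by omega, by omega⟩ hne
  · -- p = 0, q ≥ 1 : s₁ 2^{x₁} + s₂ 2^{x₂} = (-s₃) 2^{x₃} M^q
    refine lemK M hM3 hModd s₁ s₂ (-s₃) h1 h2 ?_ x₁ x₂ x₃ q hq ?_
    · rcases h3 with rfl | rfl <;> norm_num
    · simp at heq'; linarith [heq']
  · -- q = 0, p ≥ 1
    refine lemK M hM3 hModd s₁ s₃ (-s₂) h1 h3 ?_ x₁ x₃ x₂ p hp ?_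
    · rcases h2 with rfl | rfl <;> norm_num
    · simp at heq'; linarith [heq']
  · -- p, q ≥ 1 : M divides s₁ 2^{x₁}, contradiction
    exfalso
    have hdvd : M ∣ s₁ * 2 ^ x₁ := by
      have : s₁ * 2 ^ x₁ = -(s₂ * 2 ^ x₂ * M ^ p + s₃ * 2 ^ x₃ * M ^ q) := by linarith
      rw [this]
      exact dvd_neg.mpr (dvd_add (Dvd.dvd.mul_left (dvd_pow_self M (by omega)) _)
        (Dvd.dvd.mul_left (dvd_pow_self M (by omega)) _))
    have hdvd2 : M ∣ 2 ^ x₁ := by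
      rcases h1 with rfl | rfl
      · simpa using hdvd
      · have h' : M ∣ -(2 ^ x₁) := by simpa using hdvd
        exact dvd_neg.mp h'
    have := odd_pos_dvd_two_pow_aux hModd hMpos hdvd2
    linarith


/-- Let `L` be an odd prime and suppose there are nonzero integers `a`, `b` with
`a + b ≠ 0`, all three of `a`, `b`, `a + b` supported only on the primes `2` and `L`
(so `a²b²(a+b)² = 2ᵘ Lᵛ`), say `a = ±2^{u₁}L^{v₁}`, `b = ±2^{u₂}L^{v₂}`,
`a + b = ±2^{u₃}L^{v₃}`, where `v₁, v₂, v₃` are not all equal.  Then `L` is a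
Mersenne prime `2^k − 1` or a Fermat prime `2^k + 1`. -/
theorem mersenne_or_fermat_of_two_L_unit_relation
    (L : ℕ) (hL : L.Prime) (hLodd : Odd L)
    (a b : ℤ) (ha : a ≠ 0) (hb : b ≠ 0) (hab : a + b ≠ 0)
    (e₁ e₂ e₃ : ℤ) (he₁ : e₁ = 1 ∨ e₁ = -1) (he₂ : e₂ = 1 ∨ e₂ = -1)
    (he₃ : e₃ = 1 ∨ e₃ = -1)
    (u₁ u₂ u₃ v₁ v₂ v₃ : ℕ)
    (hadef : a = e₁ * 2 ^ u₁ * (L : ℤ) ^ v₁)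
    (hbdef : b = e₂ * 2 ^ u₂ * (L : ℤ) ^ v₂)
    (habdef : a + b = e₃ * 2 ^ u₃ * (L : ℤ) ^ v₃)
    (hvne : ¬ (v₁ = v₂ ∧ v₂ = v₃)) :
    ∃ k : ℕ, 1 ≤ k ∧ ((L : ℤ) = 2 ^ k - 1 ∨ (L : ℤ) = 2 ^ k + 1) := by
  have hL2 := hL.two_le
  have hLmod : L % 2 = 1 := Nat.odd_iff.mp hLodd
  have hL3 : 3 ≤ L := by omega
  have hM3 : (3:ℤ) ≤ (L:ℤ) := by exact_mod_cast hL3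
  have hModd : Odd ((L:ℤ)) := by
    obtain ⟨t, ht⟩ := hLodd
    exact ⟨(t:ℤ), by exact_mod_cast ht⟩
  have he₃' : -e₃ = 1 ∨ -e₃ = -1 := by rcases he₃ with rfl | rfl <;> norm_num
  have heq0 : e₁ * 2 ^ u₁ * (L:ℤ) ^ v₁ + e₂ * 2 ^ u₂ * (L:ℤ) ^ v₂ +
      (-e₃) * 2 ^ u₃ * (L:ℤ) ^ v₃ = 0 := by
    rw [hadef, hbdef] at habdef; linarith
  by_cases c1 : v₁ ≤ v₂ ∧ v₁ ≤ v₃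
  · exact lemP1 (L:ℤ) hM3 hModd e₁ e₂ (-e₃) he₁ he₂ he₃' u₁ u₂ u₃ v₁ v₂ v₃
      c1.1 c1.2 (by rintro ⟨p, q⟩; exact hvne ⟨by omega, by omega⟩) heq0
  · by_cases c2 : v₂ ≤ v₁ ∧ v₂ ≤ v₃
    · exact lemP1 (L:ℤ) hM3 hModd e₂ e₁ (-e₃) he₂ he₁ he₃' u₂ u₁ u₃ v₂ v₁ v₃
        c2.1 c2.2 (by rintro ⟨p, q⟩; exact hvne ⟨by omega, by omega⟩)
        (by linarith [heq0])
    · have c3 : v₃ ≤ v₁ ∧ v₃ ≤ v₂ := by omega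
      exact lemP1 (L:ℤ) hM3 hModd (-e₃) e₁ e₂ he₃' he₁ he₂ u₃ u₁ u₂ v₃ v₁ v₂
        c3.1 c3.2 (by rintro ⟨p, q⟩; exact hvne ⟨by omega, by omega⟩)
        (by linarith [heq0])
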